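/- Let n ≥ 1 and r ≥ 0, and let D = {λ ∈ ℤ^n : |λ_1| + ⋯ + |λ_n| ≤ r and |λ_1| + ⋯ + |λ_n| ≡ r (mod 2)}, viewed as a finite set of points of ℚ^n. Then the vanishing ideal in ℚ[X_1,…,X_n] of D equals the ideal generated by the polynomials ∏_{j=0}^{r} (J_ε − (r − 2j)) = (J_ε + r)(J_ε + r − 2)(J_ε + r − 4)⋯(J_ε − r + 2)(J_ε − r) for each of the 2^n sign vectors ε ∈ {±1}^n, where J_ε = ε_1 X_1 + ⋯ + ε_n X_n. -/

import Mathlib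

open MvPolynomial Finset

lemma gridFin (S : Finset ℚ) :
    ∀ (m : ℕ) (F : MvPolynomial (Fin m) ℚ),
      (∀ γ : Fin m → ℚ, (∀ i, γ i ∈ S) → eval γ F = 0) →
      F ∈ Ideal.span (Set.range fun i : Fin m => ∏ s ∈ S, (X i - C s)) := by
  intro m
  induction m with
  | zero =>
      intro F h
      have h0 := h (fun i => i.elim0) (fun i => i.elim0)
      obtain ⟨c, rfl⟩ := MvPolynomial.C_surjective (Fin 0) F
      simp only [eval_C] at h0
      simp [h0]
  | succ m ih =>
      intro F h
      rcases S.eq_empty_or_nonempty with rfl | hS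
      · have h1 : (1 : MvPolynomial (Fin (m+1)) ℚ) ∈
            Ideal.span (Set.range fun i : Fin (m+1) => ∏ s ∈ (∅ : Finset ℚ), (X i - C s)) :=
          Ideal.subset_span ⟨0, by simp⟩
        rw [Ideal.eq_top_of_isUnit_mem _ h1 isUnit_one]
        trivial
      set φ := finSuccEquiv ℚ m with hφ
      set P : Polynomial (MvPolynomial (Fin m) ℚ) :=
        ∏ s ∈ S, (Polynomial.X - Polynomial.C (C s)) with hP
      have hPm : P.Monic := Polynomial.monic_prod_of_monic _ _ fun s _ => Polynomial.monic_X_sub_C _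
      set R := (φ F) %ₘ P with hR
      have hdiv : R + P * (φ F /ₘ P) = φ F := Polynomial.modByMonic_add_div (φ F) P
      have hPdeg : P.natDegree = S.card := by
        rw [hP, Polynomial.natDegree_prod]
        · simp
        · intro s _
          exact (Polynomial.monic_X_sub_C _).ne_zero
      -- coefficients of R vanish on the grid
      have hcoeff : ∀ k, ∀ γ : Fin m → ℚ, (∀ i, γ i ∈ S) → eval γ (R.coeff k) = 0 := by
        intro k γ hγ
        have hmapR : (R.map (eval γ)) = 0 := by
          apply Polynomial.eq_zero_of_natDegree_lt_card_of_eval_eq_zero' _ S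
          · intro s hs
            have h1 : eval (Fin.cons s γ : Fin (m+1) → ℚ) F = 0 := by
              apply h
              intro i
              refine Fin.cases ?_ ?_ i
              · simpa using hs
              · intro j; simpa using hγ j
            rw [eval_eq_eval_mv_eval'] at h1
            have h2 : Polynomial.eval s (P.map (eval γ)) = 0 := by
              rw [hP, Polynomial.map_prod, Polynomial.eval_prod]
              apply Finset.prod_eq_zero hs
              simp
            have := congrArg (Polynomial.eval s ∘ Polynomial.map (eval γ)) hdiv
            simpa [h1, h2, hφ] using this
          · calc (R.map (eval γ)).natDegree ≤ R.natDegree := Polynomial.natDegree_map_le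
              _ < S.card := by
                  have hP1 : P ≠ 1 := by
                    intro h1
                    have := congrArg Polynomial.natDegree h1
                    rw [hPdeg] at this
                    simp [Finset.card_eq_zero] at this
                    exact hS.ne_empty this
                  have := Polynomial.natDegree_modByMonic_lt (φ F) hPm hP1
                  rw [hPdeg] at this
                  exact hR ▸ this
        have := congrArg (fun p => Polynomial.coeff p k) hmapR
        simpa using this
      have hsymmC : ∀ u : MvPolynomial (Fin m) ℚ,
          φ.symm (Polynomial.C u) = rename Fin.succ u := by
        have key : ∀ u : MvPolynomial (Fin m) ℚ,
            φ (rename Fin.succ u) = Polynomial.C u := by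
          intro u
          have : (φ.toAlgHom.comp (rename (Fin.succ : Fin m → Fin (m+1)))) =
              (Polynomial.CAlgHom : MvPolynomial (Fin m) ℚ →ₐ[ℚ] _) := by
            apply MvPolynomial.algHom_ext
            intro j
            simp [hφ, finSuccEquiv_X_succ, Polynomial.CAlgHom]
          have h3 := DFunLike.congr_fun this u
          simpa [Polynomial.CAlgHom] using h3
        intro u
        apply φ.injective
        rw [AlgEquiv.apply_symm_apply, key]
      have hsymmX : φ.symm Polynomial.X = X (0 : Fin (m+1)) := by
        apply φ.injective
        rw [AlgEquiv.apply_symm_apply, hφ, finSuccEquiv_X_zero]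
      have hmem : ∀ k, R.coeff k ∈
          Ideal.span (Set.range fun i : Fin m => ∏ s ∈ S, (X i - C s)) :=
        fun k => ih _ (hcoeff k)
      have hFR : φ.symm R ∈
          Ideal.span (Set.range fun i : Fin (m+1) => ∏ s ∈ S, (X i - C s)) := by
        have hRs : φ.symm R =
            ∑ k ∈ R.support, φ.symm (Polynomial.C (R.coeff k) * Polynomial.X ^ k) := by
          conv_lhs => rw [← Polynomial.sum_C_mul_X_pow_eq R]
          rw [Polynomial.sum, map_sum]
        rw [hRs]
        apply Ideal.sum_mem
        intro k _
        rw [map_mul, hsymmC, map_pow, hsymmX]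
        apply Ideal.mul_mem_right
        have h2 : rename (Fin.succ : Fin m → Fin (m+1)) (R.coeff k) ∈
            Ideal.map (rename (Fin.succ : Fin m → Fin (m+1)))
              (Ideal.span (Set.range fun i : Fin m => ∏ s ∈ S, (X i - C s))) :=
          Ideal.mem_map_of_mem _ (hmem k)
        rw [Ideal.map_span] at h2
        refine Ideal.span_mono ?_ h2
        rintro _ ⟨_, ⟨i, rfl⟩, rfl⟩
        refine ⟨i.succ, ?_⟩
        simp [map_prod]
      have hFP : φ.symm (P * (φ F /ₘ P)) ∈
          Ideal.span (Set.range fun i : Fin (m+1) => ∏ s ∈ S, (X i - C s)) := by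
        rw [map_mul]
        have hphp : φ.symm P = ∏ s ∈ S, (X (0 : Fin (m+1)) - C s) := by
          rw [hP, map_prod]
          refine Finset.prod_congr rfl fun s _ => ?_
          rw [map_sub, hsymmX, hsymmC, rename_C]
        rw [hphp]
        exact Ideal.mul_mem_right _ _ (Ideal.subset_span ⟨0, rfl⟩)
      have hFeq : F = φ.symm R + φ.symm (P * (φ F /ₘ P)) := by
        rw [← map_add, hdiv, AlgEquiv.symm_apply_apply]
      rw [hFeq]
      exact Ideal.add_mem _ hFR hFP

lemma gridLemma {ι : Type*} [Fintype ι] [DecidableEq ι] (S : Finset ℚ) (F : MvPolynomial ι ℚ)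
    (h : ∀ γ : ι → ℚ, (∀ i, γ i ∈ S) → eval γ F = 0) :
    F ∈ Ideal.span (Set.range fun i : ι => ∏ s ∈ S, (X i - C s)) := by
  classical
  set e := Fintype.equivFin ι with he
  have h1 : ∀ γ : Fin (Fintype.card ι) → ℚ, (∀ i, γ i ∈ S) →
      eval γ (rename e F) = 0 := by
    intro γ hγ
    rw [eval_rename]
    exact h _ fun i => hγ (e i)
  have h2 := gridFin S _ _ h1
  have h4 : rename (e.symm : Fin (Fintype.card ι) ≃ ι) (rename (e : ι ≃ Fin (Fintype.card ι)) F)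
      ∈ Ideal.map (rename (e.symm : Fin (Fintype.card ι) → ι))
        (Ideal.span (Set.range fun i : Fin (Fintype.card ι) => ∏ s ∈ S, (X i - C s))) :=
    Ideal.mem_map_of_mem _ h2
  rw [rename_rename] at h4
  have h5 : ((e.symm : Fin (Fintype.card ι) → ι) ∘ (e : ι → Fin (Fintype.card ι))) = id := by
    funext x; simp
  rw [h5, rename_id] at h4
  rw [Ideal.map_span] at h4
  refine Ideal.span_mono ?_ h4
  rintro _ ⟨_, ⟨i, rfl⟩, rfl⟩
  refine ⟨e.symm i, ?_⟩
  simp [map_prod]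

noncomputable section Stmt13Aux

def stmt13sgn (n : ℕ) (b : Fin n → Bool) (a : Fin n) : ℚ := if b a then 1 else -1

def stmt13Jf (n : ℕ) (b : Fin n → Bool) : MvPolynomial (Fin n) ℚ :=
  ∑ a, C (stmt13sgn n b a) * X a

def stmt13T (n : ℕ) : MvPolynomial (Fin n → Bool) ℚ →+* MvPolynomial (Fin n) ℚ :=
  eval₂Hom C (stmt13Jf n)

def stmt13bT (n : ℕ) : Fin n → Bool := fun _ => true

def stmt13bTa (n : ℕ) (a : Fin n) : Fin n → Bool := Function.update (stmt13bT n) a false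

def stmt13sec (n : ℕ) : MvPolynomial (Fin n) ℚ →+* MvPolynomial (Fin n → Bool) ℚ :=
  eval₂Hom C (fun a => C (1/2 : ℚ) * (X (stmt13bT n) - X (stmt13bTa n a)))

def stmt13S (r : ℕ) : Finset ℚ := (range (r+1)).image (fun j : ℕ => (r : ℚ) - 2 * j)

lemma stmt13_twoX (n : ℕ) (a : Fin n) :
    stmt13Jf n (stmt13bT n) - stmt13Jf n (stmt13bTa n a) = C 2 * X a := by
  classical
  rw [stmt13Jf, stmt13Jf, ← Finset.sum_sub_distrib]
  rw [Finset.sum_eq_single a]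
  · have h1 : stmt13sgn n (stmt13bT n) a = 1 := by simp [stmt13sgn, stmt13bT]
    have h2 : stmt13sgn n (stmt13bTa n a) a = -1 := by
      simp [stmt13sgn, stmt13bTa, Function.update_self]
    rw [h1, h2, ← sub_mul, ← map_sub]
    norm_num
  · intro c _ hc
    have : stmt13sgn n (stmt13bTa n a) c = stmt13sgn n (stmt13bT n) c := by
      simp [stmt13sgn, stmt13bTa, Function.update_of_ne hc]
    rw [this, sub_self]
  · simp

lemma stmt13_T_sec (n : ℕ) (f : MvPolynomial (Fin n) ℚ) :
    stmt13T n (stmt13sec n f) = f := by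
  have : (stmt13T n).comp (stmt13sec n) = RingHom.id _ := by
    apply MvPolynomial.ringHom_ext
    · intro c; simp [stmt13T, stmt13sec]
    · intro a
      simp only [RingHom.comp_apply, stmt13sec, coe_eval₂Hom, eval₂_X, RingHom.id_apply]
      rw [map_mul, map_sub]
      simp only [stmt13T, coe_eval₂Hom, eval₂_C, eval₂_X]
      rw [stmt13_twoX, ← mul_assoc, ← map_mul]
      norm_num
  exact DFunLike.congr_fun this f

lemma stmt13_eval_T (n : ℕ) (x : Fin n → ℚ) (F : MvPolynomial (Fin n → Bool) ℚ) :
    eval x (stmt13T n F) = eval (fun b => eval x (stmt13Jf n b)) F := by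
  have := MvPolynomial.eval_assoc (stmt13Jf n) x F
  rw [show (fun b => eval x (stmt13Jf n b)) = eval x ∘ stmt13Jf n from rfl, this]
  rfl

lemma stmt13_eval_Jf (n : ℕ) (x : Fin n → ℚ) (b : Fin n → Bool) :
    eval x (stmt13Jf n b) = ∑ a, stmt13sgn n b a * x a := by
  simp [stmt13Jf]

end Stmt13Aux

noncomputable section Stmt13Aux2

def stmt13xpt (n : ℕ) (γ : (Fin n → Bool) → ℚ) (a : Fin n) : ℚ :=
  (γ (stmt13bT n) - γ (stmt13bTa n a)) / 2
def stmt13jm (n : ℕ) (γ : (Fin n → Bool) → ℚ) (b : Fin n → Bool) : ℚ :=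
  ∑ a, stmt13sgn n b a * stmt13xpt n γ a

def stmt13e (n r : ℕ) (γ : (Fin n → Bool) → ℚ) : MvPolynomial (Fin n → Bool) ℚ :=
  C ((∏ b, ∏ s ∈ (stmt13S r).erase (γ b), (γ b - s))⁻¹) *
    ∏ b, ∏ s ∈ (stmt13S r).erase (γ b), (X b - C s)

lemma stmt13_e_self (n r : ℕ) (γ : (Fin n → Bool) → ℚ) : eval γ (stmt13e n r γ) = 1 := by
  classical
  have hne : (∏ b, ∏ s ∈ (stmt13S r).erase (γ b), (γ b - s)) ≠ 0 := by
    rw [Finset.prod_ne_zero_iff]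
    intro b _
    rw [Finset.prod_ne_zero_iff]
    intro s hs h
    exact Finset.ne_of_mem_erase hs (by linarith)
  rw [stmt13e, map_mul, eval_C, map_prod]
  have h2 : ∀ b ∈ (Finset.univ : Finset (Fin n → Bool)),
      eval γ (∏ s ∈ (stmt13S r).erase (γ b), (X b - C s)) =
        ∏ s ∈ (stmt13S r).erase (γ b), (γ b - s) := by
    intro b _
    rw [map_prod]
    exact Finset.prod_congr rfl fun s _ => by simp
  rw [Finset.prod_congr rfl h2, inv_mul_cancel₀ hne]

lemma stmt13_e_ne (n r : ℕ) (γ γ' : (Fin n → Bool) → ℚ) (hγ' : ∀ b, γ' b ∈ stmt13S r)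
    (hne : γ' ≠ γ) : eval γ' (stmt13e n r γ) = 0 := by
  classical
  obtain ⟨b, hb⟩ : ∃ b, γ' b ≠ γ b := by
    by_contra h
    push_neg at h
    exact hne (funext h)
  rw [stmt13e, map_mul, map_prod]
  apply mul_eq_zero_of_right
  apply Finset.prod_eq_zero (Finset.mem_univ b)
  rw [map_prod]
  apply Finset.prod_eq_zero (Finset.mem_erase.mpr ⟨hb, hγ' b⟩)
  simp

def stmt13H (n : ℕ) (b : Fin n → Bool) : MvPolynomial (Fin n → Bool) ℚ :=
  X b - ∑ a, C (stmt13sgn n b a) *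
    (C (1/2 : ℚ) * (X (stmt13bT n) - X (stmt13bTa n a)))

lemma stmt13_eval_H (n : ℕ) (γ : (Fin n → Bool) → ℚ) (b : Fin n → Bool) :
    eval γ (stmt13H n b) = γ b - stmt13jm n γ b := by
  rw [stmt13H, map_sub, map_sum, eval_X, stmt13jm]
  congr 1
  refine Finset.sum_congr rfl fun a _ => ?_
  rw [stmt13xpt]
  simp only [map_mul, eval_C, map_sub, eval_X]
  ring

lemma stmt13_caseA (n r : ℕ) (γ : (Fin n → Bool) → ℚ)
    (hγ : ∀ b, γ b ∈ stmt13S r) (hA : ∀ b, γ b = stmt13jm n γ b) :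
    ∃ lam : Fin n → ℤ, ((∑ a, |lam a|) ≤ (r:ℤ) ∧ (∑ a, |lam a|) % 2 = (r:ℤ) % 2)
      ∧ (fun a => (lam a : ℚ)) = stmt13xpt n γ := by
  classical
  have hj : ∀ b, ∃ j : ℕ, j < r + 1 ∧ γ b = (r:ℚ) - 2 * j := by
    intro b
    have := hγ b
    rw [stmt13S, Finset.mem_image] at this
    obtain ⟨j, hj1, hj2⟩ := this
    exact ⟨j, Finset.mem_range.mp hj1, hj2.symm⟩
  choose j hjlt hjval using hj
  set lam : Fin n → ℤ := fun a => (j (stmt13bTa n a) : ℤ) - j (stmt13bT n) with hlam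
  have hcast : (fun a => (lam a : ℚ)) = stmt13xpt n γ := by
    funext a
    rw [stmt13xpt, hjval, hjval, hlam]
    push_cast
    ring
  set bs : Fin n → Bool := fun a => decide (0 ≤ lam a) with hbs
  have habs : ∀ a ∈ (Finset.univ : Finset (Fin n)),
      ((|lam a| : ℤ) : ℚ) = stmt13sgn n bs a * (lam a : ℚ) := by
    intro a _
    by_cases h : 0 ≤ lam a
    · have h1 : stmt13sgn n bs a = 1 := by simp [stmt13sgn, hbs, h]
      rw [h1, abs_of_nonneg h, one_mul]
    · have h1 : stmt13sgn n bs a = -1 := by simp [stmt13sgn, hbs, h]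
      rw [h1, abs_of_neg (lt_of_not_ge h)]
      push_cast
      ring
  have key : ((∑ a, |lam a| : ℤ) : ℚ) = (r:ℚ) - 2 * (j bs) := by
    push_cast
    calc ∑ a, (|lam a| : ℚ)
        = ∑ a, stmt13sgn n bs a * (lam a : ℚ) := by
          refine Finset.sum_congr rfl fun a ha => ?_
          have := habs a ha
          push_cast at this ⊢
          exact this
      _ = ∑ a, stmt13sgn n bs a * stmt13xpt n γ a := by
          refine Finset.sum_congr rfl fun a _ => ?_
          rw [← hcast]
      _ = stmt13jm n γ bs := rfl
      _ = γ bs := (hA bs).symm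
      _ = (r:ℚ) - 2 * j bs := hjval bs
  have key2 : (∑ a, |lam a|) = (r:ℤ) - 2 * (j bs : ℤ) := by exact_mod_cast key
  have hjpos : (0:ℤ) ≤ (j bs : ℤ) := Int.ofNat_nonneg _
  exact ⟨lam, ⟨by omega, by omega⟩, hcast⟩

end Stmt13Aux2

lemma stmt13_gen_vanish (n r : ℕ) (eps : Fin n → ℤ) (heps : ∀ a, eps a = 1 ∨ eps a = -1)
    (lam : Fin n → ℤ) (h1 : (∑ a, |lam a|) ≤ (r:ℤ)) (h2 : (∑ a, |lam a|) % 2 = (r:ℤ) % 2) :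
    eval (fun a => (lam a : ℚ))
      (∏ j ∈ range (r+1),
        ((∑ a, C ((eps a : ℤ) : ℚ) * X a) - C ((r:ℚ) - 2 * (j:ℚ)))) = 0 := by
  classical
  set t : ℤ := ∑ a, eps a * lam a with ht
  have habs : |t| ≤ (r:ℤ) := by
    calc |t| ≤ ∑ a, |eps a * lam a| := Finset.abs_sum_le_sum_abs _ _
      _ = ∑ a, |lam a| := Finset.sum_congr rfl fun a _ => by
          rcases heps a with h | h <;> simp [h, abs_mul]
      _ ≤ (r:ℤ) := h1
  obtain ⟨ht1, ht2⟩ := abs_le.mp habs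
  have hpar : t % 2 = (r:ℤ) % 2 := by
    have e1 : t % 2 = (∑ a, |lam a|) % 2 := by
      rw [ht, Finset.sum_int_mod, Finset.sum_int_mod Finset.univ 2 (fun a => |lam a|)]
      congr 1
      refine Finset.sum_congr rfl fun a _ => ?_
      rcases heps a with h | h
      · rw [h, one_mul]
        rcases abs_choice (lam a) with h' | h' <;> rw [h']
        rw [Int.neg_emod_two]
      · rw [h, neg_one_mul, Int.neg_emod_two]
        rcases abs_choice (lam a) with h' | h' <;> rw [h']
        rw [Int.neg_emod_two]
    rw [e1, h2]
  have h2r : (2:ℤ) ∣ ((r:ℤ) - t) := by omega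
  obtain ⟨k, hk⟩ := h2r
  have hk0 : (0:ℤ) ≤ k := by omega
  have hkmem : k.toNat ∈ range (r+1) := by
    rw [Finset.mem_range]
    omega
  rw [map_prod]
  apply Finset.prod_eq_zero hkmem
  have heval : eval (fun a => (lam a : ℚ))
      ((∑ a, C ((eps a : ℤ) : ℚ) * X a) - C ((r:ℚ) - 2 * (k.toNat:ℚ))) =
      (t:ℚ) - ((r:ℚ) - 2 * (k:ℚ)) := by
    rw [map_sub, map_sum, eval_C]
    congr 1
    · rw [ht]
      push_cast
      exact Finset.sum_congr rfl fun a _ => by simp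
    · congr 2
      exact_mod_cast congrArg (fun z : ℤ => (z:ℚ)) (Int.toNat_of_nonneg hk0)
  rw [heval]
  have : ((r:ℤ):ℚ) - (t:ℚ) = 2 * (k:ℚ) := by exact_mod_cast congrArg (fun z : ℤ => (z:ℚ)) hk
  push_cast at this
  linarith

lemma stmt13_T_H (n : ℕ) (b : Fin n → Bool) : stmt13T n (stmt13H n b) = 0 := by
  rw [stmt13H, map_sub, map_sum]
  have hX : ∀ c, stmt13T n (X c : MvPolynomial (Fin n → Bool) ℚ) = stmt13Jf n c := fun c => by
    simp [stmt13T]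
  have hsum : ∑ a, stmt13T n (C (stmt13sgn n b a) *
      (C (1/2 : ℚ) * (X (stmt13bT n) - X (stmt13bTa n a)))) = stmt13Jf n b := by
    rw [stmt13Jf]
    refine Finset.sum_congr rfl fun a _ => ?_
    rw [map_mul, map_mul, map_sub, hX, hX, stmt13_twoX]
    rw [show stmt13T n (C (stmt13sgn n b a)) = C (stmt13sgn n b a) from by simp [stmt13T]]
    rw [show stmt13T n (C (1/2 : ℚ)) = C (1/2 : ℚ) from by simp [stmt13T]]
    rw [← mul_assoc (C (1/2 : ℚ)), ← map_mul]
    norm_num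
  rw [hX, hsum, sub_self]

/-- Let `D = {λ ∈ ℤ^n : |λ_1| + ⋯ + |λ_n| ≤ r` and
`|λ_1| + ⋯ + |λ_n| ≡ r (mod 2)}`, viewed as points of `ℚ^n`.  Then the vanishing ideal
of `D` in `ℚ[X₁,…,Xₙ]` equals the ideal generated by the polynomials
`∏_{j=0}^{r} (J_ε − (r − 2j))` for each sign vector `ε ∈ {±1}^n`, where
`J_ε = ε₁X₁ + ⋯ + εₙXₙ`. -/
theorem stmt13 (n r : ℕ) (hn : 1 ≤ n) :
    MvPolynomial.vanishingIdeal ℚ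
        ((fun lam : Fin n → ℤ => fun a : Fin n => (lam a : ℚ)) ''
          {lam : Fin n → ℤ |
            (∑ a, |lam a|) ≤ (r : ℤ) ∧ (∑ a, |lam a|) % 2 = (r : ℤ) % 2}) =
      Ideal.span
        ((fun eps : Fin n → ℤ =>
            ∏ j ∈ Finset.range (r + 1),
              ((∑ a, MvPolynomial.C (eps a : ℚ) * MvPolynomial.X a) -
                MvPolynomial.C ((r : ℚ) - 2 * (j : ℚ)))) ''
          {eps : Fin n → ℤ | ∀ a, eps a = 1 ∨ eps a = -1}) := by
  classical
  apply le_antisymm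
  · -- hard direction
    intro f hf
    set F := stmt13sec n f with hFdef
    have hTF : stmt13T n F = f := stmt13_T_sec n f
    have hFD : ∀ lam : Fin n → ℤ, (∑ a, |lam a|) ≤ (r:ℤ) →
        (∑ a, |lam a|) % 2 = (r:ℤ) % 2 →
        eval (fun b => ∑ a, stmt13sgn n b a * (lam a : ℚ)) F = 0 := by
      intro lam h1 h2
      have hx : (fun a => (lam a : ℚ)) ∈
          ((fun lam : Fin n → ℤ => fun a : Fin n => (lam a : ℚ)) ''
            {lam : Fin n → ℤ |
              (∑ a, |lam a|) ≤ (r : ℤ) ∧ (∑ a, |lam a|) % 2 = (r : ℤ) % 2}) :=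
        ⟨lam, ⟨h1, h2⟩, rfl⟩
      have h0 : eval (fun a => (lam a : ℚ)) f = 0 :=
        (mem_vanishingIdeal_iff.mp hf) _ hx
      rw [← hTF, stmt13_eval_T] at h0
      have hpt2 : (fun b => eval (fun a => (lam a : ℚ)) (stmt13Jf n b)) =
          fun b => ∑ a, stmt13sgn n b a * (lam a : ℚ) :=
        funext fun b => stmt13_eval_Jf n _ b
      rw [hpt2] at h0
      exact h0
    set Γ : Finset ((Fin n → Bool) → ℚ) :=
      Fintype.piFinset (fun _ : Fin n → Bool => stmt13S r) with hΓdef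
    set B : Finset ((Fin n → Bool) → ℚ) :=
      Γ.filter (fun γ => ¬ ∀ b, γ b = stmt13jm n γ b) with hBdef
    set bsel : ((Fin n → Bool) → ℚ) → (Fin n → Bool) := fun γ =>
      if h : ∃ b, γ b ≠ stmt13jm n γ b then h.choose else stmt13bT n with hbseldef
    have hbsel : ∀ γ ∈ B, γ (bsel γ) ≠ stmt13jm n γ (bsel γ) := by
      intro γ hγ
      have hA : ¬ ∀ b, γ b = stmt13jm n γ b := (Finset.mem_filter.mp hγ).2
      have hex : ∃ b, γ b ≠ stmt13jm n γ b := by push_neg at hA; exact hA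
      rw [hbseldef]
      simp only [dif_pos hex]
      exact hex.choose_spec
    set corr : MvPolynomial (Fin n → Bool) ℚ :=
      ∑ γ ∈ B, C (eval γ F) *
        (C ((γ (bsel γ) - stmt13jm n γ (bsel γ))⁻¹) * stmt13H n (bsel γ)) *
          stmt13e n r γ with hcorrdef
    have hevalcorr : ∀ γ' ∈ Γ, eval γ' corr = if γ' ∈ B then eval γ' F else 0 := by
      intro γ' hγ'
      have hgrid' : ∀ b, γ' b ∈ stmt13S r := by
        intro b
        exact Fintype.mem_piFinset.mp hγ' b
      rw [hcorrdef, map_sum]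
      by_cases hB : γ' ∈ B
      · rw [if_pos hB]
        rw [Finset.sum_eq_single_of_mem γ' hB]
        · rw [map_mul, map_mul, map_mul, eval_C, eval_C, stmt13_eval_H, stmt13_e_self,
            inv_mul_cancel₀ (sub_ne_zero_of_ne (hbsel γ' hB)), mul_one, mul_one]
        · intro γ hγB hne
          rw [map_mul, stmt13_e_ne n r γ γ' hgrid' (Ne.symm hne), mul_zero]
      · rw [if_neg hB]
        apply Finset.sum_eq_zero
        intro γ hγB
        have hne : γ' ≠ γ := fun h => hB (h ▸ hγB)
        rw [map_mul, stmt13_e_ne n r γ γ' hgrid' hne, mul_zero]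
    have hF' : ∀ γ' : (Fin n → Bool) → ℚ, (∀ b, γ' b ∈ stmt13S r) →
        eval γ' (F - corr) = 0 := by
      intro γ' hgrid'
      have hΓm : γ' ∈ Γ := Fintype.mem_piFinset.mpr hgrid'
      rw [map_sub, hevalcorr γ' hΓm]
      by_cases hB : γ' ∈ B
      · rw [if_pos hB, sub_self]
      · rw [if_neg hB, sub_zero]
        have hA : ∀ b, γ' b = stmt13jm n γ' b := by
          by_contra hc
          exact hB (Finset.mem_filter.mpr ⟨hΓm, hc⟩)
        obtain ⟨lam, ⟨h1, h2⟩, hxp⟩ := stmt13_caseA n r γ' hgrid' hA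
        have hpt : γ' = fun b => ∑ a, stmt13sgn n b a * (lam a : ℚ) := by
          funext b
          rw [hA b, stmt13jm]
          refine Finset.sum_congr rfl fun a _ => ?_
          rw [← hxp]
        rw [hpt]
        exact hFD lam h1 h2
    have hmem : F - corr ∈
        Ideal.span (Set.range fun b : Fin n → Bool => ∏ s ∈ stmt13S r, (X b - C s)) :=
      gridLemma _ _ hF'
    have hfT : f = stmt13T n (F - corr) := by
      rw [map_sub, hTF]
      have hz : stmt13T n corr = 0 := by
        rw [hcorrdef, map_sum]
        apply Finset.sum_eq_zero
        intro γ _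
        simp only [map_mul, stmt13_T_H, mul_zero, zero_mul]
      rw [hz, sub_zero]
    rw [hfT]
    have hmap := Ideal.mem_map_of_mem (stmt13T n) hmem
    rw [Ideal.map_span] at hmap
    refine Ideal.span_mono ?_ hmap
    rintro _ ⟨_, ⟨b, rfl⟩, rfl⟩
    refine ⟨fun a => if b a then 1 else -1, fun a => by by_cases h : b a <;> simp [h], ?_⟩
    have hinj : Set.InjOn (fun j : ℕ => (r : ℚ) - 2 * j) (range (r+1)) := by
      intro j _ j' _ hjj
      have : (j:ℚ) = (j':ℚ) := by
        simp only at hjj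
        linarith
      exact_mod_cast this
    rw [map_prod, stmt13S, Finset.prod_image hinj]
    refine Finset.prod_congr rfl fun j _ => ?_
    rw [show stmt13T n (X b - C ((r:ℚ) - 2 * j)) = stmt13Jf n b - C ((r:ℚ) - 2 * j) from by
      simp [stmt13T]]
    rw [stmt13Jf]
    congr 1
    refine Finset.sum_congr rfl fun a _ => ?_
    by_cases h : b a <;> simp [h, stmt13sgn]
  · rw [Ideal.span_le]
    rintro _ ⟨eps, heps, rfl⟩
    rw [SetLike.mem_coe, mem_vanishingIdeal_iff]
    rintro x ⟨lam, ⟨h1, h2⟩, rfl⟩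
    exact stmt13_gen_vanish n r eps heps lam h1 h2
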